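/- Fix σ > 0 and r ∈ ℝ. For α ∈ ℝ with Δ(α) := (σ²/2 − α)² + 2σ²r > 0, let d₁(α) := ((σ²/2 − α) − √Δ(α))/σ². Then at every such α the function d₁ is differentiable with d₁′(α) = (1/σ²)·(−1 + (σ²/2 − α)/√Δ(α)), and the following sign pattern holds: d₁′(α) < 0 if r > 0; d₁′(α) = 0 if r = 0 and α < σ²/2; d₁′(α) < 0 if r = 0 and α > σ²/2; d₁′(α) > 0 if r < 0 and α < σ²/2; d₁′(α) < 0 if r < 0 and α > σ²/2. -/

import Mathlib

/-- Behaviour of the smaller root `d₁(α)` of the characteristic polynomial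
`P(d) = (σ²/2)d² + (α − σ²/2)d − r` as a function of the drift `α`:
value of the derivative and its sign pattern according to the signs of `r`
and of `σ²/2 − α`. -/
theorem stmt_1 (σ r α : ℝ) (hσ : 0 < σ)
    (hΔ : 0 < (σ ^ 2 / 2 - α) ^ 2 + 2 * σ ^ 2 * r) :
    HasDerivAt
      (fun a : ℝ => ((σ ^ 2 / 2 - a) - Real.sqrt ((σ ^ 2 / 2 - a) ^ 2 + 2 * σ ^ 2 * r)) / σ ^ 2)
      ((1 / σ ^ 2) *
        (-1 + (σ ^ 2 / 2 - α) / Real.sqrt ((σ ^ 2 / 2 - α) ^ 2 + 2 * σ ^ 2 * r))) α ∧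
    (0 < r →
      (1 / σ ^ 2) * (-1 + (σ ^ 2 / 2 - α) / Real.sqrt ((σ ^ 2 / 2 - α) ^ 2 + 2 * σ ^ 2 * r)) < 0) ∧
    (r = 0 → α < σ ^ 2 / 2 →
      (1 / σ ^ 2) * (-1 + (σ ^ 2 / 2 - α) / Real.sqrt ((σ ^ 2 / 2 - α) ^ 2 + 2 * σ ^ 2 * r)) = 0) ∧
    (r = 0 → σ ^ 2 / 2 < α →
      (1 / σ ^ 2) * (-1 + (σ ^ 2 / 2 - α) / Real.sqrt ((σ ^ 2 / 2 - α) ^ 2 + 2 * σ ^ 2 * r)) < 0) ∧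
    (r < 0 → α < σ ^ 2 / 2 →
      0 < (1 / σ ^ 2) * (-1 + (σ ^ 2 / 2 - α) / Real.sqrt ((σ ^ 2 / 2 - α) ^ 2 + 2 * σ ^ 2 * r))) ∧
    (r < 0 → σ ^ 2 / 2 < α →
      (1 / σ ^ 2) * (-1 + (σ ^ 2 / 2 - α) / Real.sqrt ((σ ^ 2 / 2 - α) ^ 2 + 2 * σ ^ 2 * r)) < 0) := by
  have hσ2 : (0:ℝ) < σ ^ 2 := by positivity
  set Δ : ℝ := (σ ^ 2 / 2 - α) ^ 2 + 2 * σ ^ 2 * r with hΔdef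
  have hs : 0 < Real.sqrt Δ := Real.sqrt_pos.mpr hΔ
  have hs2 : Real.sqrt Δ ^ 2 = Δ := Real.sq_sqrt hΔ.le
  have hsne : Real.sqrt Δ ≠ 0 := hs.ne'
  constructor
  · -- derivative
    have hg : HasDerivAt (fun a : ℝ => (σ ^ 2 / 2 - a) ^ 2 + 2 * σ ^ 2 * r)
        (2 * (σ ^ 2 / 2 - α) * (-1)) α := by
      have h1 : HasDerivAt (fun a : ℝ => σ ^ 2 / 2 - a) (-1) α := by
        simpa using (hasDerivAt_id α).const_sub (σ ^ 2 / 2)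
      simpa using ((h1.pow 2).add_const (2 * σ ^ 2 * r))
    have hsqrt : HasDerivAt (fun a : ℝ => Real.sqrt ((σ ^ 2 / 2 - a) ^ 2 + 2 * σ ^ 2 * r))
        (2 * (σ ^ 2 / 2 - α) * (-1) / (2 * Real.sqrt Δ)) α := hg.sqrt hΔ.ne'
    have h1 : HasDerivAt (fun a : ℝ => σ ^ 2 / 2 - a) (-1) α := by
      simpa using (hasDerivAt_id α).const_sub (σ ^ 2 / 2)
    have := (h1.sub hsqrt).div_const (σ ^ 2)
    refine this.congr_deriv ?_
    field_simp
    ring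
  refine ⟨?_, ?_, ?_, ?_, ?_⟩
  all_goals intro h1
  · -- r > 0 : sqrt Δ > |c - α| ≥ c - α
    have habs : |σ ^ 2 / 2 - α| < Real.sqrt Δ := by
      rw [← Real.sqrt_sq_eq_abs]
      exact Real.sqrt_lt_sqrt (by positivity) (by nlinarith)
    have hlt : σ ^ 2 / 2 - α < Real.sqrt Δ := lt_of_le_of_lt (le_abs_self _) habs
    have : (σ ^ 2 / 2 - α) / Real.sqrt Δ < 1 := (div_lt_one hs).mpr hlt
    have hfac : -1 + (σ ^ 2 / 2 - α) / Real.sqrt Δ < 0 := by linarith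
    exact mul_neg_of_pos_of_neg (by positivity) hfac
  all_goals intro h2
  · -- r = 0, α < c
    have hΔeq : Δ = (σ ^ 2 / 2 - α) ^ 2 := by rw [hΔdef, h1]; ring
    have : Real.sqrt Δ = σ ^ 2 / 2 - α := by
      rw [hΔeq, Real.sqrt_sq (by linarith)]
    rw [this, div_self (by linarith)]
    ring
  · -- r = 0, α > c
    have hΔeq : Δ = (σ ^ 2 / 2 - α) ^ 2 := by rw [hΔdef, h1]; ring
    have hsv : Real.sqrt Δ = α - σ ^ 2 / 2 := by
      rw [hΔeq]
      rw [show (σ ^ 2 / 2 - α) ^ 2 = (α - σ ^ 2 / 2) ^ 2 by ring, Real.sqrt_sq (by linarith)]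
    have hneg : (σ ^ 2 / 2 - α) / Real.sqrt Δ < 0 :=
      div_neg_of_neg_of_pos (by linarith) hs
    exact mul_neg_of_pos_of_neg (by positivity) (by linarith)
  · -- r < 0, α < c : sqrt Δ < c - α
    have hlt : Real.sqrt Δ < σ ^ 2 / 2 - α := by
      rw [← Real.sqrt_sq (le_of_lt (by linarith : (0:ℝ) < σ ^ 2 / 2 - α))]
      exact Real.sqrt_lt_sqrt hΔ.le (by nlinarith)
    have : 1 < (σ ^ 2 / 2 - α) / Real.sqrt Δ := (one_lt_div hs).mpr hlt
    exact mul_pos (by positivity) (by linarith)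
  · -- r < 0, α > c
    have hneg : (σ ^ 2 / 2 - α) / Real.sqrt Δ < 0 :=
      div_neg_of_neg_of_pos (by linarith) hs
    exact mul_neg_of_pos_of_neg (by positivity) (by linarith)
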